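/- If A is an operator satisfying A γ₅ = γ₅ A†, and A†A is positive definite, then the Neuberger operator D = (1/ā)(1 − A (A†A)^{−1/2}) satisfies the Ginsparg-Wilson relation γ₅ D + D γ₅ = ā D γ₅ D. -/

import Mathlib

open Matrix
open scoped ComplexOrder

namespace Matrix.PosSemidef

/-- The positive semidefinite square root of a positive semidefinite matrix
(the definition Mathlib had in December 2024, since removed). -/
noncomputable def sqrt {n 𝕜 : Type*} [Fintype n] [DecidableEq n] [RCLike 𝕜]
    {A : Matrix n n 𝕜} (hA : PosSemidef A) : Matrix n n 𝕜 :=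
  hA.1.eigenvectorUnitary.1 * diagonal ((↑) ∘ (√·) ∘ hA.1.eigenvalues) *
  (star hA.1.eigenvectorUnitary : Matrix n n 𝕜)

lemma posSemidef_sqrt {n 𝕜 : Type*} [Fintype n] [DecidableEq n] [RCLike 𝕜]
    {A : Matrix n n 𝕜} (hA : PosSemidef A) : PosSemidef hA.sqrt := by
  have hd : PosSemidef (diagonal ((↑) ∘ (√·) ∘ hA.1.eigenvalues : n → 𝕜)) :=
    posSemidef_diagonal_iff.mpr (fun i => by
      simp only [Function.comp_apply, RCLike.ofReal_nonneg]; exact Real.sqrt_nonneg _)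
  have h := hd.mul_mul_conjTranspose_same (hA.1.eigenvectorUnitary : Matrix n n 𝕜)
  unfold sqrt
  rw [star_eq_conjTranspose]
  exact h

lemma sqrt_mul_self {n 𝕜 : Type*} [Fintype n] [DecidableEq n] [RCLike 𝕜]
    {A : Matrix n n 𝕜} (hA : PosSemidef A) : hA.sqrt * hA.sqrt = A := by
  have hE : diagonal ((↑) ∘ (√·) ∘ hA.1.eigenvalues : n → 𝕜) *
      diagonal ((↑) ∘ (√·) ∘ hA.1.eigenvalues : n → 𝕜) =
      diagonal (RCLike.ofReal ∘ hA.1.eigenvalues) := by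
    rw [diagonal_mul_diagonal]
    refine congr_arg _ (funext fun v => ?_)
    simp only [Function.comp_apply]
    rw [← RCLike.ofReal_mul, Real.mul_self_sqrt (hA.eigenvalues_nonneg v)]
  have hU : (star hA.1.eigenvectorUnitary : Matrix n n 𝕜) * hA.1.eigenvectorUnitary.1 = 1 :=
    Unitary.star_mul_self_of_mem hA.1.eigenvectorUnitary.2
  conv_rhs => rw [hA.1.spectral_theorem, Unitary.conjStarAlgAut_apply]
  unfold sqrt
  rw [← hE]
  calc _ = (hA.1.eigenvectorUnitary.1 * diagonal ((↑) ∘ (√·) ∘ hA.1.eigenvalues : n → 𝕜)) *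
        ((star hA.1.eigenvectorUnitary : Matrix n n 𝕜) * hA.1.eigenvectorUnitary.1) *
        (diagonal ((↑) ∘ (√·) ∘ hA.1.eigenvalues : n → 𝕜) *
        (star hA.1.eigenvectorUnitary : Matrix n n 𝕜)) := by simp only [mul_assoc]
    _ = _ := by rw [hU, mul_one]; simp only [mul_assoc]

open scoped MatrixOrder in
lemma eq_sqrt_of_sq_eq {n 𝕜 : Type*} [Fintype n] [DecidableEq n] [RCLike 𝕜]
    {A B : Matrix n n 𝕜} (hA : PosSemidef A) (hB : PosSemidef B) (hAB : A ^ 2 = B) :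
    A = hB.sqrt := by
  have h1 : CFC.sqrt B = A := CFC.sqrt_unique (by rw [← sq]; exact hAB) hA.nonneg
  have h2 : CFC.sqrt B = hB.sqrt := CFC.sqrt_unique (sqrt_mul_self hB) (posSemidef_sqrt hB).nonneg
  exact h1.symm.trans h2

end Matrix.PosSemidef

/-- If `A γ₅ = γ₅ A†` and `A†A` is positive definite, then the Neuberger operator
`D = (1/ā)(1 − A (A†A)^{−1/2})` satisfies the Ginsparg-Wilson relation
`γ₅ D + D γ₅ = ā D γ₅ D`. -/
theorem neuberger_satisfies_ginsparg_wilson (n : ℕ)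
    (A γ₅ : Matrix (Fin n) (Fin n) ℂ) (abar : ℝ) (habar : 0 < abar)
    (h5herm : γ₅ᴴ = γ₅) (h5sq : γ₅ * γ₅ = 1)
    (hA : A * γ₅ = γ₅ * Aᴴ)
    (hposdef : (Aᴴ * A).PosDef)
    (D : Matrix (Fin n) (Fin n) ℂ)
    (hD : D = (1 / (abar : ℂ)) •
      (1 - A * ((posSemidef_conjTranspose_mul_self A).sqrt)⁻¹)) :
    γ₅ * D + D * γ₅ = (abar : ℂ) • (D * γ₅ * D) := by
  set hP := posSemidef_conjTranspose_mul_self A with hPdef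
  set S : Matrix (Fin n) (Fin n) ℂ := hP.sqrt with hSdef
  have hSpsd : S.PosSemidef := hP.posSemidef_sqrt
  have hSH : Sᴴ = S := hSpsd.isHermitian
  have hSS : S * S = Aᴴ * A := hP.sqrt_mul_self
  -- S is invertible
  have hdetS : IsUnit S.det := by
    have h : S.det * S.det = (Aᴴ * A).det := by rw [← det_mul, hSS]
    have h2 : (Aᴴ * A).det ≠ 0 := hposdef.det_pos.ne'
    exact isUnit_iff_ne_zero.mpr (fun hz => h2 (by rw [← h, hz, zero_mul]))
  have hSinv : S * S⁻¹ = 1 := mul_nonsing_inv S hdetS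
  have hSinv' : S⁻¹ * S = 1 := nonsing_inv_mul S hdetS
  have hSinvH : S⁻¹ᴴ = S⁻¹ := by rw [conjTranspose_nonsing_inv, hSH]
  -- T = γ₅ A is Hermitian
  have hAH : Aᴴ = γ₅ * A * γ₅ := by
    rw [mul_assoc, hA, ← mul_assoc, h5sq, one_mul]
  set T : Matrix (Fin n) (Fin n) ℂ := γ₅ * A with hTdef
  have hTH : Tᴴ = T := by
    rw [hTdef, conjTranspose_mul, h5herm, hAH]
    rw [mul_assoc, mul_assoc, h5sq, mul_one]
  have hTT : T * T = Aᴴ * A := by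
    calc T * T = γ₅ * (A * γ₅) * A := by rw [hTdef]; noncomm_ring
      _ = γ₅ * (γ₅ * Aᴴ) * A := by rw [hA]
      _ = (γ₅ * γ₅) * Aᴴ * A := by noncomm_ring
      _ = Aᴴ * A := by rw [h5sq, one_mul]
  -- key claim: T * S⁻¹ * T = S
  have hKpsd : (T * S⁻¹ * T).PosSemidef := by
    have h := hSpsd.conjTranspose_mul_mul_same (S⁻¹ * T)
    have heq : (S⁻¹ * T)ᴴ * S * (S⁻¹ * T) = T * S⁻¹ * T := by
      rw [conjTranspose_mul, hSinvH, hTH]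
      rw [mul_assoc (T * S⁻¹) S (S⁻¹ * T), ← mul_assoc S S⁻¹ T, hSinv, one_mul]
    rwa [heq] at h
  have hKsq : (T * S⁻¹ * T) ^ 2 = Aᴴ * A := by
    rw [pow_two]
    calc T * S⁻¹ * T * (T * S⁻¹ * T)
        = T * S⁻¹ * (T * T) * S⁻¹ * T := by noncomm_ring
      _ = T * S⁻¹ * (S * S) * S⁻¹ * T := by rw [hTT, hSS]
      _ = T * (S⁻¹ * S) * (S * S⁻¹) * T := by noncomm_ring
      _ = T * T := by rw [hSinv, hSinv', mul_one, mul_one]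
      _ = Aᴴ * A := hTT
  have hKey : T * S⁻¹ * T = S := hKpsd.eq_sqrt_of_sq_eq hP hKsq
  -- hence M = T S⁻¹ squares to 1
  have hM : (T * S⁻¹) * (T * S⁻¹) = 1 := by
    rw [← mul_assoc, hKey, hSinv]
  -- hence U γ₅ U = γ₅ for U = A S⁻¹
  set U : Matrix (Fin n) (Fin n) ℂ := A * S⁻¹ with hUdef
  have hU5U : U * γ₅ * U = γ₅ := by
    have h : γ₅ * (U * γ₅ * U) = 1 := by
      calc γ₅ * (U * γ₅ * U) = (T * S⁻¹) * (T * S⁻¹) := by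
            rw [hUdef, hTdef]; noncomm_ring
        _ = 1 := hM
    calc U * γ₅ * U = γ₅ * (γ₅ * (U * γ₅ * U)) := by
          rw [← mul_assoc, ← mul_assoc, ← mul_assoc, h5sq, one_mul]
      _ = γ₅ := by rw [h, mul_one]
  -- final algebra
  have habar' : (abar : ℂ) ≠ 0 := by exact_mod_cast habar.ne'
  have hc : (abar : ℂ) * (1 / (abar : ℂ)) = 1 := mul_one_div_cancel habar'
  rw [hD]
  have hexp : γ₅ * (1 - U) + (1 - U) * γ₅ = (1 - U) * γ₅ * (1 - U) := by
    have : (1 - U) * γ₅ * (1 - U) = γ₅ - γ₅ * U - U * γ₅ + U * γ₅ * U := by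
      noncomm_ring
    rw [this, hU5U]
    noncomm_ring
  calc γ₅ * ((1 / (abar:ℂ)) • (1 - U)) + ((1 / (abar:ℂ)) • (1 - U)) * γ₅
      = (1 / (abar:ℂ)) • (γ₅ * (1 - U) + (1 - U) * γ₅) := by
        rw [Matrix.mul_smul, Matrix.smul_mul, smul_add]
    _ = (1 / (abar:ℂ)) • ((1 - U) * γ₅ * (1 - U)) := by rw [hexp]
    _ = ((abar:ℂ) * (1 / (abar:ℂ)) * (1 / (abar:ℂ))) • ((1 - U) * γ₅ * (1 - U)) := by
        rw [hc, one_mul]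
    _ = (abar:ℂ) • (((1 / (abar:ℂ)) • (1 - U)) * γ₅ * ((1 / (abar:ℂ)) • (1 - U))) := by
        rw [Matrix.smul_mul, Matrix.smul_mul, Matrix.mul_smul, smul_smul, smul_smul,
          mul_assoc]
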